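/- arXiv:1505.04503 — 4 statements merged into one kernel-verified Lean document; each statement's English description precedes it below -/
import Mathlib

section
/- Let L be a Lie ideal of a C*-algebra A. Then A[L,L]A ⊆ L + L², i.e., the linear span of {a[l₁,l₂]b : a,b ∈ A, l₁,l₂ ∈ L} is contained in the linear span of L together with products of two elements of L. -/
/-- The linear span of commutators `[X,Y]` of elements of two subsets of a C*-algebra. -/
def commSpan {A : Type*} [NonUnitalCStarAlgebra A] (X Y : Set A) : Submodule ℂ A :=
  Submodule.span ℂ {z | ∃ x ∈ X, ∃ y ∈ Y, z = x * y - y * x}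

/-- The linear span of products `XY` of elements of two subsets of a C*-algebra. -/
def prodSpan {A : Type*} [NonUnitalCStarAlgebra A] (X Y : Set A) : Submodule ℂ A :=
  Submodule.span ℂ {z | ∃ x ∈ X, ∃ y ∈ Y, z = x * y}

/-- A Lie ideal of `A` is a linear subspace `L` with `[L,A] ⊆ L`. -/
def IsLieIdeal {A : Type*} [NonUnitalCStarAlgebra A] (L : Submodule ℂ A) : Prop :=
  commSpan (L : Set A) Set.univ ≤ L

/-- if `L` is a Lie ideal of a C*-algebra `A`, then `A[L,L]A ⊆ L + L²`. -/
theorem lie_ideal_ALLA_subset (A : Type*) [NonUnitalCStarAlgebra A]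
    (L : Submodule ℂ A) (hL : IsLieIdeal L) :
    Submodule.span ℂ {z : A | ∃ a b : A, ∃ l₁ ∈ L, ∃ l₂ ∈ L,
        z = a * (l₁ * l₂ - l₂ * l₁) * b}
      ≤ L ⊔ prodSpan (L : Set A) (L : Set A) := by
  set M := L ⊔ prodSpan (L : Set A) (L : Set A) with hM
  -- [L, A] ⊆ L
  have hcomm : ∀ l ∈ L, ∀ a : A, l * a - a * l ∈ L := by
    intro l hl a
    exact hL (Submodule.subset_span ⟨l, hl, a, Set.mem_univ a, rfl⟩)
  -- L ≤ M and L·L ⊆ M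
  have hLM : L ≤ M := le_sup_left
  have hprod : ∀ l ∈ L, ∀ m ∈ L, l * m ∈ M := by
    intro l hl m hm
    exact le_sup_right (α := Submodule ℂ A)
      (Submodule.subset_span ⟨l, hl, m, hm, rfl⟩ : l * m ∈ prodSpan (L : Set A) (L : Set A))
  -- Step 1: [l,m] * c ∈ M for all c.
  have step1 : ∀ l ∈ L, ∀ m ∈ L, ∀ c : A, (l * m - m * l) * c ∈ M := by
    intro l hl m hm c
    have h1 : l * (m * c) - (m * c) * l ∈ M := hLM (hcomm l hl (m * c))
    have h2 : m * (l * c - c * l) ∈ M := hprod m hm _ (hcomm l hl c)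
    have key : (l * m - m * l) * c
        = (l * (m * c) - (m * c) * l) - m * (l * c - c * l) := by
      noncomm_ring
    rw [key]; exact sub_mem h1 h2
  -- Step 2: [a, x] ∈ M for all x ∈ M.
  have step2 : ∀ a : A, ∀ x ∈ M, a * x - x * a ∈ M := by
    intro a
    have : M ≤ Submodule.comap (LinearMap.mulLeft ℂ a - LinearMap.mulRight ℂ a) M := by
      rw [hM]
      apply sup_le
      · intro l hl
        simp only [Submodule.mem_comap, LinearMap.sub_apply, LinearMap.mulLeft_apply,
          LinearMap.mulRight_apply]
        exact hLM (by simpa using neg_mem (hcomm l hl a))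
      · rw [prodSpan, Submodule.span_le]
        rintro z ⟨l, hl, m, hm, rfl⟩
        simp only [Set.mem_preimage, SetLike.mem_coe, Submodule.mem_comap, LinearMap.sub_apply,
          LinearMap.mulLeft_apply, LinearMap.mulRight_apply]
        have h1 : (a * l - l * a) * m ∈ M := by
          have : a * l - l * a ∈ L := by
            have := hcomm l hl a
            simpa using neg_mem this
          exact hprod _ this m hm
        have h2 : l * (a * m - m * a) ∈ M := by
          have : a * m - m * a ∈ L := by
            have := hcomm m hm a
            simpa using neg_mem this
          exact hprod l hl _ this
        have key : a * (l * m) - (l * m) * a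
            = (a * l - l * a) * m + l * (a * m - m * a) := by noncomm_ring
        rw [key]; exact add_mem h1 h2
    intro x hx
    have := this hx
    simpa using this
  -- Main proof.
  rw [Submodule.span_le]
  rintro z ⟨a, b, l, hl, m, hm, rfl⟩
  simp only [SetLike.mem_coe]
  have h1 : (l * m - m * l) * b ∈ M := step1 l hl m hm b
  have h2 : a * ((l * m - m * l) * b) - ((l * m - m * l) * b) * a ∈ M := step2 a _ h1
  have h3 : (l * m - m * l) * (b * a) ∈ M := step1 l hl m hm (b * a)
  have key : a * (l * m - m * l) * b
      = (a * ((l * m - m * l) * b) - ((l * m - m * l) * b) * a)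
        + (l * m - m * l) * (b * a) := by noncomm_ring
  rw [key]; exact add_mem h2 h3
end

section
/- Let A be a C*-algebra and let k ≥ 2. Every element x ∈ A with xᵏ = 0 is a sum of k−1 commutators, i.e., x = Σ_{i=1}^{k−1} [aᵢ, bᵢ] for some aᵢ, bᵢ ∈ A. -/
/-- `nupow x n = x^(n+1)`: powers with positive exponent in a possibly non-unital algebra. -/
def nupow {A : Type*} [Mul A] (x : A) : ℕ → A
  | 0 => x
  | n + 1 => nupow x n * x

open scoped Topology
open Filter

namespace NilCom

noncomputable def q4 : ℝ → ℝ := fun t => Real.sqrt (Real.sqrt (max t 0))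
noncomputable def fF (e : ℝ) : ℝ → ℝ :=
  fun t => Real.sqrt (max t 0) * Real.sqrt (Real.sqrt (max t 0)) / (max t 0 + e)
noncomputable def gF (e : ℝ) : ℝ → ℝ := fun t => max t 0 / (max t 0 + e)

lemma cont_max : Continuous fun t : ℝ => max t 0 := continuous_id.max continuous_const

lemma denom_pos {e : ℝ} (he : 0 < e) (t : ℝ) : 0 < max t 0 + e :=
  add_pos_of_nonneg_of_pos (le_max_right t 0) he

lemma cont_q4 : Continuous q4 :=
  Real.continuous_sqrt.comp (Real.continuous_sqrt.comp cont_max)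

lemma cont_sqrtmax : Continuous fun t : ℝ => Real.sqrt (max t 0) :=
  Real.continuous_sqrt.comp cont_max

lemma cont_fF {e : ℝ} (he : 0 < e) : Continuous (fF e) :=
  (cont_sqrtmax.mul cont_q4).div (cont_max.add continuous_const)
    (fun t => (denom_pos he t).ne')

lemma cont_gF {e : ℝ} (he : 0 < e) : Continuous (gF e) :=
  cont_max.div (cont_max.add continuous_const) (fun t => (denom_pos he t).ne')

lemma q4_zero : q4 0 = 0 := by simp [q4]

lemma fF_zero (e : ℝ) : fF e 0 = 0 := by simp [fF]

lemma gF_zero (e : ℝ) : gF e 0 = 0 := by simp [gF]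

lemma fF_mul_q4 {e : ℝ} (t : ℝ) : fF e t * q4 t = gF e t := by
  unfold fF q4 gF
  rw [div_mul_eq_mul_div, mul_assoc, Real.mul_self_sqrt (Real.sqrt_nonneg _),
    Real.mul_self_sqrt (le_max_right t 0)]

lemma q4_mul_q4 (t : ℝ) : q4 t * q4 t = Real.sqrt (max t 0) := by
  unfold q4; rw [Real.mul_self_sqrt (Real.sqrt_nonneg _)]

lemma S00 (p q : ℝ) (hp : 0 ≤ p) (hq : 0 ≤ q) : p * q^4 ≤ q * p^4 + q^5 := by
  rcases le_total p q with h | h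
  · have h1 : p * q^4 ≤ q * q^4 := mul_le_mul_of_nonneg_right h (by positivity)
    nlinarith [mul_nonneg hq (pow_nonneg hp 4)]
  · have h3 : q^3 ≤ p^3 := pow_le_pow_left₀ hq h 3
    have h1 : q^3 * p ≤ p^3 * p := mul_le_mul_of_nonneg_right h3 hp
    have h2 : q * (q^3 * p) ≤ q * (p^3 * p) := mul_le_mul_of_nonneg_left h1 hq
    nlinarith [pow_nonneg hq 5]

lemma Spoly (p q1 q2 : ℝ) (hp : 0 ≤ p) (h1 : 0 < q1) (h2 : 0 < q2) :
    (p^2*p/(p^4+q1^4) - p^2*p/(p^4+q2^4)) * p^2 ≤ q1 + q2 := by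
  have d1 : (0:ℝ) < p^4 + q1^4 := by positivity
  have d2 : (0:ℝ) < p^4 + q2^4 := by positivity
  rw [div_sub_div _ _ d1.ne' d2.ne', div_mul_eq_mul_div, div_le_iff₀ (by positivity)]
  have key := S00 p q2 hp h2.le
  have key2 : p^4 * (p * q2^4) ≤ p^4 * (q2 * p^4 + q2^5) :=
    mul_le_mul_of_nonneg_left key (by positivity)
  nlinarith [mul_nonneg (mul_nonneg h1.le (pow_nonneg hp 4)) (pow_nonneg h2.le 4),
    mul_nonneg (mul_nonneg h1.le (pow_nonneg h1.le 4)) (pow_nonneg hp 4),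
    mul_nonneg (mul_nonneg h1.le (pow_nonneg h1.le 4)) (pow_nonneg h2.le 4),
    mul_nonneg (mul_nonneg h2.le (pow_nonneg hp 4)) (pow_nonneg h1.le 4),
    mul_nonneg (mul_nonneg h2.le (pow_nonneg h2.le 4)) (pow_nonneg h1.le 4),
    mul_nonneg (pow_nonneg hp 5) (pow_nonneg h1.le 4),
    mul_nonneg h1.le (pow_nonneg hp 8)]

lemma Sdiff {t e1 e2 : ℝ} (ht : 0 ≤ t) (h1 : 0 < e1) (h2 : 0 < e2) :
    (fF e1 t - fF e2 t) * Real.sqrt t ≤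
      Real.sqrt (Real.sqrt e1) + Real.sqrt (Real.sqrt e2) := by
  unfold fF
  rw [max_eq_left ht]
  set p := Real.sqrt (Real.sqrt t) with hp_def
  set q1 := Real.sqrt (Real.sqrt e1) with hq1_def
  set q2 := Real.sqrt (Real.sqrt e2) with hq2_def
  have hp : 0 ≤ p := Real.sqrt_nonneg _
  have hq1 : 0 < q1 := Real.sqrt_pos.mpr (Real.sqrt_pos.mpr h1)
  have hq2 : 0 < q2 := Real.sqrt_pos.mpr (Real.sqrt_pos.mpr h2)
  have h2t : Real.sqrt t = p^2 := (Real.sq_sqrt (Real.sqrt_nonneg t)).symm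
  have h4t : t = p^4 := by
    have := Real.sq_sqrt ht
    rw [h2t] at this; rw [← this]; ring
  have h4e1 : e1 = q1^4 := by
    have h2e : Real.sqrt e1 = q1^2 := (Real.sq_sqrt (Real.sqrt_nonneg e1)).symm
    have := Real.sq_sqrt h1.le
    rw [h2e] at this; rw [← this]; ring
  have h4e2 : e2 = q2^4 := by
    have h2e : Real.sqrt e2 = q2^2 := (Real.sq_sqrt (Real.sqrt_nonneg e2)).symm
    have := Real.sq_sqrt h2.le
    rw [h2e] at this; rw [← this]; ring
  rw [h2t, h4t, h4e1, h4e2]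
  exact Spoly p q1 q2 hp hq1 hq2

lemma gbound {t e : ℝ} (ht : 0 ≤ t) (he : 0 < e) :
    |gF e t * t * gF e t - (gF e t * t + (t * gF e t - t))| ≤ e := by
  unfold gF
  rw [max_eq_left ht]
  have hd : 0 < t + e := by linarith
  have key : t/(t+e) * t * (t/(t+e)) - (t/(t+e) * t + (t * (t/(t+e)) - t))
      = t * e^2/(t+e)^2 := by
    field_simp
    ring
  rw [key, abs_of_nonneg (by positivity), div_le_iff₀ (by positivity)]
  nlinarith [mul_nonneg ht he.le, sq_nonneg t, mul_nonneg (mul_nonneg ht ht) he.le]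

variable {A : Type*} [NonUnitalCStarAlgebra A]

lemma quasi_nonneg (x : A) : ∀ t ∈ quasispectrum ℝ (star x * x), 0 ≤ t := by
  intro t ht
  rw [Unitization.quasispectrum_eq_spectrum_inr' ℝ ℂ] at ht
  letI := CStarAlgebra.spectralOrder (Unitization ℂ A)
  haveI := CStarAlgebra.spectralOrderedRing (Unitization ℂ A)
  rw [Unitization.inr_mul, Unitization.inr_star] at ht
  exact spectrum_star_mul_self_nonneg t ht

lemma normsq_eq (x : A) (F : ℝ → ℝ) (hF : Continuous F) (hF0 : F 0 = 0) :
    ‖x * cfcₙ F (star x * x)‖ ^ 2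
      = ‖cfcₙ (fun t => F t * t * F t) (star x * x)‖ := by
  set h : A := star x * x with hh_def
  have hsa : IsSelfAdjoint h := IsSelfAdjoint.star_mul_self x
  set c : A := cfcₙ F h with hc_def
  have hcsa : IsSelfAdjoint c := cfcₙ_predicate F h
  have e1 : star (x * c) * (x * c) = c * h * c := by
    rw [star_mul, hcsa.star_eq, hh_def]
    noncomm_ring
  have e2 : c * h * c = cfcₙ (fun t => F t * t * F t) h := by
    conv_lhs => rw [← cfcₙ_id' ℝ h]
    rw [hc_def, ← cfcₙ_mul F (fun t : ℝ => t) h hF.continuousOn hF0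
        (continuous_id.continuousOn) rfl,
      ← cfcₙ_mul (fun t => F t * t) F h (by fun_prop) (by simp [hF0])
        hF.continuousOn hF0]
  rw [sq, ← CStarRing.norm_star_mul_self, e1, e2]

lemma normsq_sub_eq (x : A) (F : ℝ → ℝ) (hF : Continuous F) (hF0 : F 0 = 0) :
    ‖x * cfcₙ F (star x * x) - x‖ ^ 2
      = ‖cfcₙ (fun t => F t * t * F t - (F t * t + (t * F t - t))) (star x * x)‖ := by
  set h : A := star x * x with hh_def
  have hsa : IsSelfAdjoint h := IsSelfAdjoint.star_mul_self x
  set c : A := cfcₙ F h with hc_def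
  have hcsa : IsSelfAdjoint c := cfcₙ_predicate F h
  have e1 : star (x * c - x) * (x * c - x) = c * h * c - (c * h + (h * c - h)) := by
    rw [star_sub, star_mul, hcsa.star_eq, hh_def]
    noncomm_ring
  have e2 : c * h * c = cfcₙ (fun t => F t * t * F t) h := by
    conv_lhs => rw [← cfcₙ_id' ℝ h]
    rw [hc_def, ← cfcₙ_mul F (fun t : ℝ => t) h hF.continuousOn hF0
        (continuous_id.continuousOn) rfl,
      ← cfcₙ_mul (fun t => F t * t) F h (by fun_prop) (by simp [hF0])
        hF.continuousOn hF0]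
  have e3 : c * h = cfcₙ (fun t => F t * t) h := by
    conv_lhs => rw [← cfcₙ_id' ℝ h]
    rw [hc_def, ← cfcₙ_mul F (fun t : ℝ => t) h hF.continuousOn hF0
        (continuous_id.continuousOn) rfl]
  have e4 : h * c = cfcₙ (fun t => t * F t) h := by
    conv_lhs => rw [← cfcₙ_id' ℝ h]
    rw [hc_def, ← cfcₙ_mul (fun t : ℝ => t) F h (continuous_id.continuousOn) rfl
        hF.continuousOn hF0]
  have e5 : cfcₙ (fun t => F t * t * F t - (F t * t + (t * F t - t))) h
      = c * h * c - (c * h + (h * c - h)) := by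
    rw [cfcₙ_sub (fun t => F t * t * F t) (fun t => F t * t + (t * F t - t)) h
        (by fun_prop) (by simp [hF0]) (by fun_prop) (by simp [hF0]),
      cfcₙ_add (fun t => F t * t) (fun t => t * F t - t) h
        (by fun_prop) (by simp [hF0]) (by fun_prop) (by simp [hF0]),
      cfcₙ_sub (fun t => t * F t) (fun t : ℝ => t) h
        (by fun_prop) (by simp [hF0]) (continuous_id.continuousOn) rfl,
      e2, e3, e4, cfcₙ_id' ℝ h]
  rw [sq, ← CStarRing.norm_star_mul_self, e1, e5]

theorem key (x : A) :
    ∃ u q : A, u * q = x ∧ (∀ c : A, c * x = 0 → c * u = 0) ∧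
      (∀ w : A, star x * (x * w) = 0 → q * w = 0) := by
  set h : A := star x * x with hh_def
  have hsa : IsSelfAdjoint h := IsSelfAdjoint.star_mul_self x
  have hspec : ∀ t ∈ quasispectrum ℝ h, 0 ≤ t := quasi_nonneg x
  set q : A := cfcₙ q4 h with hq_def
  have hqprop : ∀ w : A, star x * (x * w) = 0 → q * w = 0 := by
    intro w hw
    have hqsa : IsSelfAdjoint q := cfcₙ_predicate q4 h
    set r : A := cfcₙ (fun t => Real.sqrt (max t 0)) h with hr_def
    have hrsa : IsSelfAdjoint r := cfcₙ_predicate _ h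
    have hqq : q * q = r := by
      rw [hq_def, hr_def,
        ← cfcₙ_mul q4 q4 h cont_q4.continuousOn q4_zero cont_q4.continuousOn q4_zero]
      exact congrArg (cfcₙ · h) (funext q4_mul_q4)
    have hrr : r * r = h := by
      rw [hr_def, ← cfcₙ_mul _ _ h cont_sqrtmax.continuousOn (by simp)
        cont_sqrtmax.continuousOn (by simp)]
      have e : cfcₙ (fun t => Real.sqrt (max t 0) * Real.sqrt (max t 0)) h
          = cfcₙ (fun t : ℝ => t) h := by
        apply cfcₙ_congr
        intro t ht
        simp only
        rw [Real.mul_self_sqrt (le_max_right t 0), max_eq_left (hspec t ht)]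
      rw [e, cfcₙ_id' ℝ h]
    have hhw : h * w = 0 := by rw [hh_def, mul_assoc, hw]
    have hK : h * (w * star w) = 0 := by rw [← mul_assoc, hhw, zero_mul]
    have h1 : r * (w * star w) = 0 := by
      have e : star (r * (w * star w)) * (r * (w * star w))
          = (w * star w) * (h * (w * star w)) := by
        rw [star_mul, hrsa.star_eq, star_mul, star_star, ← hrr]
        noncomm_ring
      rw [← CStarRing.star_mul_self_eq_zero_iff, e, hK, mul_zero]
    have h2 : q * (w * star w) = 0 := by
      have e : star (q * (w * star w)) * (q * (w * star w))
          = (w * star w) * (r * (w * star w)) := by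
        rw [star_mul, hqsa.star_eq, star_mul, star_star, ← hqq]
        noncomm_ring
      rw [← CStarRing.star_mul_self_eq_zero_iff, e, h1, mul_zero]
    have e : (q * w) * star (q * w) = (q * (w * star w)) * star q := by
      rw [star_mul]; noncomm_ring
    rw [← CStarRing.mul_star_self_eq_zero_iff, e, h2, zero_mul]
  set ε : ℕ → ℝ := fun n => 1 / (n + 1) with hε_def
  have hεpos : ∀ n, 0 < ε n := fun n => by positivity
  set s : ℕ → A := fun n => x * cfcₙ (fF (ε n)) h with hs_def
  have hdiff : ∀ m n, ‖s m - s n‖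
      ≤ Real.sqrt (Real.sqrt (ε m)) + Real.sqrt (Real.sqrt (ε n)) := by
    intro m n
    have hB : (0:ℝ) ≤ Real.sqrt (Real.sqrt (ε m)) + Real.sqrt (Real.sqrt (ε n)) := by
      positivity
    have e0 : s m - s n = x * cfcₙ (fun t => fF (ε m) t - fF (ε n) t) h := by
      rw [hs_def]
      simp only
      rw [cfcₙ_sub (fF (ε m)) (fF (ε n)) h (cont_fF (hεpos m)).continuousOn (fF_zero _)
        (cont_fF (hεpos n)).continuousOn (fF_zero _), mul_sub]
    have e1 := normsq_eq x (fun t => fF (ε m) t - fF (ε n) t)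
      ((cont_fF (hεpos m)).sub (cont_fF (hεpos n))) (by simp [fF_zero])
    rw [← hh_def] at e1
    have e2 : ‖cfcₙ (fun t => (fF (ε m) t - fF (ε n) t) * t * (fF (ε m) t - fF (ε n) t)) h‖
        ≤ (Real.sqrt (Real.sqrt (ε m)) + Real.sqrt (Real.sqrt (ε n))) ^ 2 := by
      apply norm_cfcₙ_le
      intro t ht
      have ht0 : 0 ≤ t := hspec t ht
      have esq : (fF (ε m) t - fF (ε n) t) * t * (fF (ε m) t - fF (ε n) t)
          = ((fF (ε m) t - fF (ε n) t) * Real.sqrt t) ^ 2 := by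
        rw [mul_pow, Real.sq_sqrt ht0]; ring
      rw [esq, Real.norm_eq_abs, abs_of_nonneg (sq_nonneg _)]
      have hup := Sdiff ht0 (hεpos m) (hεpos n)
      have hlo := Sdiff ht0 (hεpos n) (hεpos m)
      apply sq_le_sq'
      · nlinarith [hlo]
      · exact hup
    have e3 : ‖s m - s n‖ ^ 2
        ≤ (Real.sqrt (Real.sqrt (ε m)) + Real.sqrt (Real.sqrt (ε n))) ^ 2 := by
      rw [e0, e1]; exact e2
    calc ‖s m - s n‖ = Real.sqrt (‖s m - s n‖ ^ 2) := (Real.sqrt_sq (norm_nonneg _)).symm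
      _ ≤ Real.sqrt ((Real.sqrt (Real.sqrt (ε m)) + Real.sqrt (Real.sqrt (ε n))) ^ 2) :=
          Real.sqrt_le_sqrt e3
      _ = _ := Real.sqrt_sq hB
  have hcauchy : CauchySeq s := by
    apply cauchySeq_of_le_tendsto_0 (fun N => 2 * Real.sqrt (Real.sqrt (ε N)))
    · intro n m N hn hm
      rw [dist_eq_norm]
      have hmono : ∀ k l : ℕ, k ≤ l → Real.sqrt (Real.sqrt (ε l)) ≤ Real.sqrt (Real.sqrt (ε k)) := by
        intro k l hkl
        apply Real.sqrt_le_sqrt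
        apply Real.sqrt_le_sqrt
        rw [hε_def]
        apply one_div_le_one_div_of_le (by positivity)
        exact_mod_cast by omega
      have := hdiff n m
      have h1 := hmono N n hn
      have h2 := hmono N m hm
      linarith
    · have h0 : Tendsto ε atTop (𝓝 0) := by
        rw [hε_def]
        exact tendsto_one_div_add_atTop_nhds_zero_nat
      have h1 : Tendsto (fun N => Real.sqrt (Real.sqrt (ε N))) atTop (𝓝 0) := by
        have hc : Continuous fun t : ℝ => Real.sqrt (Real.sqrt t) :=
          Real.continuous_sqrt.comp Real.continuous_sqrt
        have := (hc.tendsto 0).comp h0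
        simpa [Function.comp_def] using this
      have := h1.const_mul (2:ℝ)
      simpa using this
  obtain ⟨u, hu⟩ := cauchySeq_tendsto_of_complete hcauchy
  have hub : ∀ n, ‖s n * q - x‖ ≤ Real.sqrt (ε n) := by
    intro n
    have e0 : s n * q = x * cfcₙ (gF (ε n)) h := by
      rw [hs_def, hq_def]
      simp only
      rw [mul_assoc, ← cfcₙ_mul (fF (ε n)) q4 h (cont_fF (hεpos n)).continuousOn (fF_zero _)
        cont_q4.continuousOn q4_zero]
      congr 1
      exact congrArg (cfcₙ · h) (funext fun t => fF_mul_q4 t)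
    have e1 := normsq_sub_eq x (gF (ε n)) (cont_gF (hεpos n)) (gF_zero _)
    rw [← hh_def] at e1
    have e2 : ‖cfcₙ (fun t => gF (ε n) t * t * gF (ε n) t
        - (gF (ε n) t * t + (t * gF (ε n) t - t))) h‖ ≤ ε n := by
      apply norm_cfcₙ_le
      intro t ht
      rw [Real.norm_eq_abs]
      exact gbound (hspec t ht) (hεpos n)
    have e3 : ‖s n * q - x‖ ^ 2 ≤ ε n := by rw [e0, e1]; exact e2
    calc ‖s n * q - x‖ = Real.sqrt (‖s n * q - x‖ ^ 2) := (Real.sqrt_sq (norm_nonneg _)).symm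
      _ ≤ Real.sqrt (ε n) := Real.sqrt_le_sqrt e3
  refine ⟨u, q, ?_, ?_, hqprop⟩
  · have h1 : Tendsto (fun n => s n * q) atTop (𝓝 (u * q)) := hu.mul_const q
    have h2 : Tendsto (fun n => s n * q) atTop (𝓝 x) := by
      rw [tendsto_iff_norm_sub_tendsto_zero]
      apply squeeze_zero (fun n => norm_nonneg _) hub
      have h0 : Tendsto ε atTop (𝓝 0) := by
        rw [hε_def]
        exact tendsto_one_div_add_atTop_nhds_zero_nat
      have := (Real.continuous_sqrt.tendsto 0).comp h0
      simpa [Function.comp_def] using this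
    exact tendsto_nhds_unique h1 h2
  · intro c hc
    have hz : ∀ n, c * s n = 0 := by
      intro n
      rw [hs_def]
      simp only
      rw [← mul_assoc, hc, zero_mul]
    have h1 : Tendsto (fun n => c * s n) atTop (𝓝 (c * u)) := hu.const_mul c
    simp only [hz] at h1
    exact (tendsto_nhds_unique h1 tendsto_const_nhds)

end NilCom


lemma nupow_succ_left {A : Type*} [Semigroup A] (x : A) (n : ℕ) :
    nupow x (n + 1) = x * nupow x n := by
  induction n with
  | zero => rfl
  | succ n ih =>
    show nupow x (n + 1) * x = x * nupow x (n + 1)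
    conv_rhs => rw [show nupow x (n + 1) = nupow x n * x from rfl]
    rw [ih, mul_assoc]

lemma sum_commutators {A : Type*} [NonUnitalCStarAlgebra A] :
    ∀ (n : ℕ) (x : A), nupow x n = 0 →
      ∃ a b : Fin n → A, x = ∑ i, (a i * b i - b i * a i) := by
  intro n
  induction n with
  | zero =>
    intro x hx
    exact ⟨fun _ => 0, fun _ => 0, by simp [show x = 0 from hx]⟩
  | succ n ih =>
    intro x hx
    obtain ⟨u, q, huq, hcu, hqw⟩ := NilCom.key x
    set y : A := q * u with hy_def
    have hxy : x = (u * q - q * u) + y := by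
      rw [hy_def, sub_add_cancel, huq]
    have hqn : q * nupow x n = 0 := by
      apply hqw
      rw [← nupow_succ_left, hx, mul_zero]
    have hyn : nupow y n = 0 := by
      have hid : ∀ m, nupow y (m + 1) = q * (nupow x m * u) := by
        intro m
        induction m with
        | zero =>
          show nupow y 0 * y = _
          rw [hy_def]
          calc (q * u) * (q * u) = q * ((u * q) * u) := by noncomm_ring
            _ = q * (x * u) := by rw [huq]
        | succ m ihm =>
          show nupow y (m + 1) * y = _
          rw [ihm, hy_def]
          calc q * (nupow x m * u) * (q * u) = q * ((nupow x m * (u * q)) * u) := by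
                noncomm_ring
            _ = q * ((nupow x m * x) * u) := by rw [huq]
            _ = q * (nupow x (m + 1) * u) := rfl
      cases n with
      | zero =>
        show y = 0
        rw [hy_def]
        exact hcu q hqn
      | succ m =>
        rw [hid m]
        have h1 : (q * nupow x m) * x = 0 := by
          rw [mul_assoc]
          exact hqn
        have h2 := hcu (q * nupow x m) h1
        rw [← mul_assoc]
        exact h2
    obtain ⟨a, b, hab⟩ := ih y hyn
    refine ⟨Fin.cons u a, Fin.cons q b, ?_⟩
    rw [Fin.sum_univ_succ]
    simp only [Fin.cons_zero, Fin.cons_succ]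
    rw [← hab]
    exact hxy

/-- in a C*-algebra, every element `x` with `x^k = 0` (`k ≥ 2`) is a sum of
`k - 1` commutators. -/
theorem nilpotent_sum_commutators (A : Type*) [NonUnitalCStarAlgebra A]
    (k : ℕ) (hk : 2 ≤ k) (x : A) (hx : nupow x (k - 1) = 0) :
    ∃ a b : Fin (k - 1) → A, x = ∑ i, (a i * b i - b i * a i) :=
  sum_commutators (k - 1) x hx
end

section
/- Let A be a unital C*-algebra and N ∈ ℕ, and suppose there exist x₁,…,x_N ∈ A with xᵢ² = 0 and d₁,…,d_N ∈ A such that 1 = Σ_{i=1}^N dᵢ* xᵢ* xᵢ dᵢ (A is weakly (2,N)-divisible). Then every element a ∈ A can be written as a = Σ_{i=1}^N [aᵢ,bᵢ] + Σ_{i=1}^N [cᵢ,dᵢ]·[cᵢ',dᵢ'] for suitable elements aᵢ,bᵢ,cᵢ,dᵢ,cᵢ',dᵢ' ∈ A. -/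
section auxlem

variable {A : Type*} [CStarAlgebra A]

lemma aux_smul_nonneg [PartialOrder A] [StarOrderedRing A]
    (t : ℝ) (ht : 0 ≤ t) {z : A} (hz : 0 ≤ z) : 0 ≤ t • z := by
  have h1 : t • z = star (Real.sqrt t • (1:A)) * z * (Real.sqrt t • (1:A)) := by
    rw [star_smul, star_trivial, star_one, smul_mul_assoc, mul_smul_comm, one_mul, mul_one,
      smul_smul, Real.mul_self_sqrt ht]
  rw [h1]; exact star_left_conjugate_nonneg hz _

lemma aux_pow_nonneg [PartialOrder A] [StarOrderedRing A]
    {z : A} (hz : 0 ≤ z) : ∀ l, 0 ≤ z ^ l := by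
  intro l
  induction l using Nat.strong_induction_on with
  | _ l ih =>
    match l with
    | 0 => simpa using star_mul_self_nonneg (1:A)
    | 1 => simpa using hz
    | (m+2) =>
      have h1 : z ^ (m+2) = star z * z ^ m * z := by
        rw [(IsSelfAdjoint.of_nonneg hz).star_eq]
        have h2 : m + 2 = 1 + m + 1 := by omega
        rw [h2, pow_add, pow_add, pow_one]
      rw [h1]
      exact star_left_conjugate_nonneg (ih m (by omega)) z

lemma aux_pow_mul_pow_nonneg [PartialOrder A] [StarOrderedRing A]
    {b c : A} (hb : 0 ≤ b) (hc : 0 ≤ c) (hbc : Commute b c)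
    (j l : ℕ) (hpar : Even j ∨ Even l) : 0 ≤ b ^ j * c ^ l := by
  rcases hpar with ⟨m, hm⟩ | ⟨m, hm⟩
  · subst hm
    have h1 : b ^ (m + m) * c ^ l = star (b ^ m) * c ^ l * b ^ m := by
      rw [(IsSelfAdjoint.of_nonneg (aux_pow_nonneg hb m)).star_eq]
      rw [pow_add, mul_assoc, mul_assoc, ((hbc.pow_left m).pow_right l).eq]
    rw [h1]
    exact star_left_conjugate_nonneg (aux_pow_nonneg hc l) _
  · subst hm
    have h1 : b ^ j * c ^ (m + m) = star (c ^ m) * b ^ j * c ^ m := by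
      rw [(IsSelfAdjoint.of_nonneg (aux_pow_nonneg hc m)).star_eq]
      rw [pow_add, ← mul_assoc, ((hbc.pow_left j).pow_right m).eq]
    rw [h1]
    exact star_left_conjugate_nonneg (aux_pow_nonneg hb j) _

/-- The key ring-theoretic identity: one commutator plus one product of two
commutators recovers `s * D * X * x * P⁴ * d`. -/
lemma aux_key {R : Type*} [Ring R] (x X d D s P Q : R)
    (hPx : P * x = 0) (hQx : Q * x = x * P) (hXQ : X * Q = P * X) (hQP : Q * P = 0) :
    ((s*(D*(X*Q))) * (Q*(Q*(Q*(x*d)))) - (Q*(Q*(Q*(x*d)))) * (s*(D*(X*Q)))) +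
      ((x*P)*P - P*(x*P)) * (P*(d*(s*(D*(X*Q)))) - (d*(s*(D*(X*Q))))*P)
      = s * (D * (X * (x * (P*(P*(P*(P*d))))))) := by
  have hPxz : ∀ z, P*(x*z) = 0 := fun z => by rw [← mul_assoc, hPx, zero_mul]
  have hQxz : ∀ z, Q*(x*z) = x*(P*z) := fun z => by rw [← mul_assoc, hQx, mul_assoc]
  have hXQz : ∀ z, X*(Q*z) = P*(X*z) := fun z => by rw [← mul_assoc, hXQ, mul_assoc]
  have hQPz : ∀ z, Q*(P*z) = 0 := fun z => by rw [← mul_assoc, hQP, zero_mul]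
  have hGF : (Q*(Q*(Q*(x*d)))) * (s*(D*(X*Q)))
      = x*(P*(P*(P*(d*(s*(D*(X*Q))))))) := by
    simp only [mul_assoc]
    rw [hQxz, hQxz, hQxz]
  have hProd : ((x*P)*P - P*(x*P)) * (P*(d*(s*(D*(X*Q)))) - (d*(s*(D*(X*Q))))*P)
      = x*(P*(P*(P*(d*(s*(D*(X*Q))))))) := by
    rw [hPxz (P)]
    have h2 : (d*(s*(D*(X*Q))))*P = 0 := by
      simp only [mul_assoc]
      rw [hQP]
      simp only [mul_zero]
    rw [h2, sub_zero, sub_zero]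
    simp only [mul_assoc]
  have hFG : (s*(D*(X*Q))) * (Q*(Q*(Q*(x*d))))
      = s * (D * (X * (x * (P*(P*(P*(P*d))))))) := by
    simp only [mul_assoc]
    rw [hQxz, hQxz, hQxz, hQxz]
  rw [hGF, hProd, hFG, sub_add_cancel]

/-- The commutation rules coming from a square-zero element. -/
lemma aux_rules (x : A) (hx : x * x = 0) (M : ℝ) (n : ℕ) :
    (1 - (1 - M⁻¹ • (star x * x)) ^ n) * x = 0 ∧
    (1 - (1 - M⁻¹ • (x * star x)) ^ n) * x = x * (1 - (1 - M⁻¹ • (star x * x)) ^ n) ∧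
    star x * (1 - (1 - M⁻¹ • (x * star x)) ^ n)
      = (1 - (1 - M⁻¹ • (star x * x)) ^ n) * star x ∧
    (1 - (1 - M⁻¹ • (x * star x)) ^ n) * (1 - (1 - M⁻¹ • (star x * x)) ^ n) = 0 := by
  have hX2 : star x * star x = 0 := by rw [← star_mul, hx, star_zero]
  have hhx : (star x * x) * x = 0 := by rw [mul_assoc, hx, mul_zero]
  have hxh : x * (star x * x) = (x * star x) * x := by rw [mul_assoc]
  have hXk : star x * (x * star x) = (star x * x) * star x := by rw [mul_assoc]
  have hkh : (x * star x) * (star x * x) = 0 := by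
    rw [mul_assoc, ← mul_assoc (star x), hX2, zero_mul, mul_zero]
  set vv : A := 1 - M⁻¹ • (star x * x) with hvv
  set uu : A := 1 - M⁻¹ • (x * star x) with huu
  have hvx : vv * x = x := by
    rw [hvv, sub_mul, one_mul, smul_mul_assoc, hhx, smul_zero, sub_zero]
  have hvnx : ∀ m, vv ^ m * x = x := by
    intro m; induction m with
    | zero => rw [pow_zero, one_mul]
    | succ m ih => rw [pow_succ, mul_assoc, hvx, ih]
  have hxv : x * vv = uu * x := by
    rw [hvv, huu, mul_sub, mul_one, sub_mul, one_mul, mul_smul_comm, smul_mul_assoc, hxh]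
  have hxvn : ∀ m, x * vv ^ m = uu ^ m * x := by
    intro m; induction m with
    | zero => simp
    | succ m ih => rw [pow_succ, ← mul_assoc, ih, mul_assoc, hxv, ← mul_assoc, ← pow_succ]
  have hXu : star x * uu = vv * star x := by
    rw [hvv, huu, mul_sub, mul_one, sub_mul, one_mul, mul_smul_comm, smul_mul_assoc, hXk]
  have hXun : ∀ m, star x * uu ^ m = vv ^ m * star x := by
    intro m; induction m with
    | zero => simp
    | succ m ih => rw [pow_succ, ← mul_assoc, ih, mul_assoc, hXu, ← mul_assoc, ← pow_succ]
  refine ⟨?_, ?_, ?_, ?_⟩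
  · rw [sub_mul, one_mul, hvnx, sub_self]
  · rw [sub_mul, one_mul, ← hxvn, mul_sub, mul_one]
  · rw [mul_sub, mul_one, hXun, sub_mul, one_mul]
  · have e1 : (1 : A) - uu ^ n = (∑ j ∈ Finset.range n, uu ^ j) * (M⁻¹ • (x * star x)) := by
      calc (1:A) - uu ^ n = -(uu ^ n - 1) := by rw [neg_sub]
      _ = -((∑ j ∈ Finset.range n, uu ^ j) * (uu - 1)) := by rw [geom_sum_mul]
      _ = (∑ j ∈ Finset.range n, uu ^ j) * (1 - uu) := by rw [← mul_neg, neg_sub]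
      _ = (∑ j ∈ Finset.range n, uu ^ j) * (M⁻¹ • (x * star x)) := by rw [huu, sub_sub_cancel]
    have e2 : (1 : A) - vv ^ n = (M⁻¹ • (star x * x)) * (∑ j ∈ Finset.range n, vv ^ j) := by
      calc (1:A) - vv ^ n = -(vv ^ n - 1) := by rw [neg_sub]
      _ = -((vv - 1) * ∑ j ∈ Finset.range n, vv ^ j) := by rw [mul_geom_sum]
      _ = (1 - vv) * ∑ j ∈ Finset.range n, vv ^ j := by rw [← neg_mul, neg_sub]
      _ = (M⁻¹ • (star x * x)) * ∑ j ∈ Finset.range n, vv ^ j := by rw [hvv, sub_sub_cancel]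
    rw [e1, e2]
    have h3 : (x * star x) * ((M⁻¹ • (star x * x)) * (∑ j ∈ Finset.range n, vv ^ j)) = 0 := by
      rw [← mul_assoc, mul_smul_comm, hkh, smul_zero, zero_mul]
    rw [mul_assoc, smul_mul_assoc, h3, smul_zero, mul_zero]

/-- The norm estimate for the error term `h - h * P⁴`. -/
lemma aux_eta_norm [PartialOrder A] [StarOrderedRing A] [Nontrivial A]
    {h : A} (hh0 : 0 ≤ h) (n : ℕ) (hn0 : n ≠ 0) (hneven : Even n) :
    ‖h - h * (1 - (1 - (‖h‖ + 1)⁻¹ • h) ^ n) ^ 4‖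
      ≤ 15 * ((‖h‖ + 1) * ((n:ℝ) + 1)⁻¹) := by
  set M : ℝ := ‖h‖ + 1 with hM
  have hMpos : 0 < M := by positivity
  set cc : A := M⁻¹ • h with hcc
  set vv : A := 1 - cc with hvv
  set P : A := 1 - vv ^ n with hP
  have hone : (0:A) ≤ 1 := by simpa using star_mul_self_nonneg (1:A)
  have hcc0 : 0 ≤ cc := aux_smul_nonneg _ (inv_nonneg.mpr hMpos.le) hh0
  have hccle : cc ≤ 1 := by
    have h1 : h ≤ algebraMap ℝ A ‖h‖ := (IsSelfAdjoint.of_nonneg hh0).le_algebraMap_norm_self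
    have h2 : cc ≤ (M⁻¹ * ‖h‖) • 1 := by
      have h3 : 0 ≤ M⁻¹ • (algebraMap ℝ A ‖h‖ - h) :=
        aux_smul_nonneg _ (inv_nonneg.mpr hMpos.le) (sub_nonneg.mpr h1)
      have h4 : M⁻¹ • (algebraMap ℝ A ‖h‖ - h) = (M⁻¹ * ‖h‖) • 1 - cc := by
        rw [smul_sub, hcc, Algebra.algebraMap_eq_smul_one, smul_smul]
      rw [h4] at h3
      exact sub_nonneg.mp h3
    have h5 : (M⁻¹ * ‖h‖) • (1:A) ≤ 1 := by
      have h6 : 0 ≤ (1 - M⁻¹ * ‖h‖) • (1:A) := by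
        apply aux_smul_nonneg _ _ hone
        have : ‖h‖ ≤ M := by rw [hM]; linarith
        have : M⁻¹ * ‖h‖ ≤ M⁻¹ * M := by
          apply mul_le_mul_of_nonneg_left this (inv_nonneg.mpr hMpos.le)
        rw [inv_mul_cancel₀ hMpos.ne'] at this
        linarith
      have h7 : (1 - M⁻¹ * ‖h‖) • (1:A) = 1 - (M⁻¹ * ‖h‖) • 1 := by
        rw [sub_smul, one_smul]
      rw [h7] at h6
      exact sub_nonneg.mp h6
    exact h2.trans h5
  have hvv0 : 0 ≤ vv := sub_nonneg.mpr hccle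
  have hvvle1 : vv ≤ 1 := by rw [hvv]; exact sub_le_self 1 hcc0
  have hvvnorm : ‖vv‖ ≤ 1 := by
    have := CStarAlgebra.norm_le_norm_of_nonneg_of_le hvv0 hvvle1
    rwa [norm_one] at this
  have hPnorm : ‖P‖ ≤ 2 := by
    calc ‖P‖ ≤ ‖(1:A)‖ + ‖vv ^ n‖ := norm_sub_le 1 (vv ^ n)
    _ ≤ 1 + ‖vv‖ ^ n := by
        rw [norm_one]
        exact add_le_add le_rfl (norm_pow_le' vv (Nat.pos_of_ne_zero hn0))
    _ ≤ 1 + 1 := by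
        have hvpow : ‖vv‖ ^ n ≤ 1 := pow_le_one₀ (norm_nonneg vv) hvvnorm
        linarith
    _ = 2 := by norm_num
  -- Bernstein bound on z = cc * vv ^ n
  set z : A := cc * vv ^ n with hz
  have hccvv : Commute cc vv := by
    rw [hvv]
    exact (Commute.one_right cc).sub_right (Commute.refl cc)
  have hz0 : 0 ≤ z := by
    have := aux_pow_mul_pow_nonneg hcc0 hvv0 hccvv 1 n (Or.inr hneven)
    rwa [pow_one] at this
  have hnR : (0:ℝ) < (n:ℝ) + 1 := by positivity
  have hzle : z ≤ ((n:ℝ) + 1)⁻¹ • 1 := by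
    have hadd : cc + vv = 1 := by rw [hvv]; abel
    have hsum := hccvv.add_pow (n+1)
    rw [hadd, one_pow] at hsum
    have hmem : (1:ℕ) ∈ Finset.range (n+2) := by
      simp only [Finset.mem_range]; omega
    rw [← Finset.sum_erase_add _ _ hmem] at hsum
    have hterm1 : cc ^ 1 * vv ^ (n + 1 - 1) * ((n+1).choose 1 : A) = ((n:ℝ) + 1) • z := by
      rw [pow_one, Nat.add_sub_cancel, Nat.choose_one_right]
      rw [(Nat.cast_commute (n+1) (cc * vv ^ n)).eq.symm, ← nsmul_eq_mul,
        ← Nat.cast_smul_eq_nsmul ℝ]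
      push_cast
      rfl
    rw [hterm1] at hsum
    have hS0 : 0 ≤ ∑ m ∈ (Finset.range (n+2)).erase 1,
        cc ^ m * vv ^ (n + 1 - m) * ((n+1).choose m : A) := by
      apply Finset.sum_nonneg
      intro m hm
      have hm1 : m ≠ 1 := (Finset.mem_erase.mp hm).1
      have hmr : m < n + 2 := Finset.mem_range.mp (Finset.mem_erase.mp hm).2
      have hterm : 0 ≤ cc ^ m * vv ^ (n + 1 - m) := by
        apply aux_pow_mul_pow_nonneg hcc0 hvv0 hccvv
        rcases Nat.even_or_odd m with he | ho
        · exact Or.inl he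
        · right
          have hm3 : m ≤ n + 1 := by omega
          exact Nat.Odd.sub_odd hneven.add_one ho
      rw [(Nat.cast_commute ((n+1).choose m) (cc ^ m * vv ^ (n + 1 - m))).eq.symm,
        ← nsmul_eq_mul]
      exact nsmul_nonneg hterm _
    have hle1 : ((n:ℝ) + 1) • z ≤ 1 := by
      calc ((n:ℝ) + 1) • z ≤ (∑ m ∈ (Finset.range (n+2)).erase 1,
          cc ^ m * vv ^ (n + 1 - m) * ((n+1).choose m : A)) + ((n:ℝ) + 1) • z :=
            le_add_of_nonneg_left hS0
      _ = 1 := hsum.symm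
    have h8 : 0 ≤ ((n:ℝ) + 1)⁻¹ • ((1:A) - ((n:ℝ) + 1) • z) :=
      aux_smul_nonneg _ (inv_nonneg.mpr hnR.le) (sub_nonneg.mpr hle1)
    have h9 : ((n:ℝ) + 1)⁻¹ • ((1:A) - ((n:ℝ) + 1) • z) = ((n:ℝ) + 1)⁻¹ • 1 - z := by
      rw [smul_sub, smul_smul, inv_mul_cancel₀ hnR.ne', one_smul]
    rw [h9] at h8
    exact sub_nonneg.mp h8
  have hznorm : ‖z‖ ≤ ((n:ℝ) + 1)⁻¹ := by
    have := CStarAlgebra.norm_le_norm_of_nonneg_of_le hz0 hzle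
    rwa [norm_smul, norm_one, mul_one, Real.norm_eq_abs, abs_of_pos (by positivity)] at this
  -- the factorization of the error term
  have hfact : h - h * P ^ 4 = (h * vv ^ n) * (1 + P + P^2 + P^3) := by
    have h1 : (1:A) - P ^ 4 = (1 - P) * (1 + P + P^2 + P^3) := by noncomm_ring
    have h2 : (1:A) - P = vv ^ n := by rw [hP, sub_sub_cancel]
    calc h - h * P ^ 4 = h * ((1:A) - P ^ 4) := by rw [mul_sub, mul_one]
    _ = h * ((vv ^ n) * (1 + P + P^2 + P^3)) := by rw [h1, h2]
    _ = (h * vv ^ n) * (1 + P + P^2 + P^3) := by rw [mul_assoc]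
  have hWnorm : ‖(1:A) + P + P^2 + P^3‖ ≤ 15 := by
    have h2 : ‖P^2‖ ≤ 4 := by
      calc ‖P^2‖ ≤ ‖P‖^2 := norm_pow_le' P (by norm_num)
      _ ≤ 2^2 := by exact pow_le_pow_left₀ (norm_nonneg P) hPnorm 2
      _ = 4 := by norm_num
    have h3 : ‖P^3‖ ≤ 8 := by
      calc ‖P^3‖ ≤ ‖P‖^3 := norm_pow_le' P (by norm_num)
      _ ≤ 2^3 := by exact pow_le_pow_left₀ (norm_nonneg P) hPnorm 3
      _ = 8 := by norm_num
    calc ‖(1:A) + P + P^2 + P^3‖ ≤ ‖(1:A) + P + P^2‖ + ‖P^3‖ := norm_add_le _ _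
    _ ≤ (‖(1:A) + P‖ + ‖P^2‖) + ‖P^3‖ := by
        have := norm_add_le ((1:A) + P) (P^2); linarith
    _ ≤ ((‖(1:A)‖ + ‖P‖) + ‖P^2‖) + ‖P^3‖ := by
        have := norm_add_le (1:A) P; linarith
    _ ≤ ((1 + 2) + 4) + 8 := by rw [norm_one]; linarith
    _ = 15 := by norm_num
  have hhvn : h * vv ^ n = M • z := by
    rw [hz, ← smul_mul_assoc, hcc, smul_smul, mul_inv_cancel₀ hMpos.ne', one_smul]
  have hhvnnorm : ‖h * vv ^ n‖ ≤ M * ((n:ℝ) + 1)⁻¹ := by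
    rw [hhvn, norm_smul, Real.norm_eq_abs, abs_of_pos hMpos]
    exact mul_le_mul_of_nonneg_left hznorm hMpos.le
  calc ‖h - h * P ^ 4‖ = ‖(h * vv ^ n) * (1 + P + P^2 + P^3)‖ := by rw [hfact]
  _ ≤ ‖h * vv ^ n‖ * ‖(1:A) + P + P^2 + P^3‖ := norm_mul_le _ _
  _ ≤ (M * ((n:ℝ) + 1)⁻¹) * 15 := by
      apply mul_le_mul hhvnnorm hWnorm (norm_nonneg _) (by positivity)
  _ = 15 * (M * ((n:ℝ) + 1)⁻¹) := by ring

end auxlem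

/-- if a unital C*-algebra `A` is weakly `(2,N)`-divisible, i.e.
`1 = ∑_{i=1}^N dᵢ* xᵢ* xᵢ dᵢ` with `xᵢ² = 0`, then every element of `A` is a sum of `N`
commutators plus a sum of `N` products of two commutators. -/
theorem weakly_divisible_sum_commutators (A : Type*) [CStarAlgebra A] (N : ℕ)
    (x d : Fin N → A) (hx : ∀ i, x i * x i = 0)
    (hdiv : (1 : A) = ∑ i, star (d i) * star (x i) * x i * d i) :
    ∀ a : A, ∃ (f g c e c' e' : Fin N → A),
      a = ∑ i, (f i * g i - g i * f i) +
        ∑ i, (c i * e i - e i * c i) * (c' i * e' i - e' i * c' i) := by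
  intro a
  rcases subsingleton_or_nontrivial A with hsub | hnt
  · exact ⟨0, 0, 0, 0, 0, 0, Subsingleton.elim _ _⟩
  letI := CStarAlgebra.spectralOrder A
  letI := CStarAlgebra.spectralOrderedRing A
  classical
  set M : Fin N → ℝ := fun i => ‖star (x i) * x i‖ + 1 with hM
  have hMpos : ∀ i, 0 < M i := fun i => by positivity
  set K : ℝ := ∑ i, 15 * (‖d i‖ ^ 2 * M i) with hK
  have hK0 : 0 ≤ K := Finset.sum_nonneg fun i _ => by positivity
  set n : ℕ := 2 * ⌈K⌉₊ + 2 with hn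
  have hn0 : n ≠ 0 := by omega
  have hneven : Even n := ⟨⌈K⌉₊ + 1, by omega⟩
  have hKlt : K < (n:ℝ) + 1 := by
    have h1 := Nat.le_ceil K
    have h2 : ((⌈K⌉₊ : ℕ) : ℝ) ≤ (n : ℝ) := Nat.cast_le.mpr (by omega)
    linarith
  set P : Fin N → A := fun i => 1 - (1 - (M i)⁻¹ • (star (x i) * x i)) ^ n with hP
  set Q : Fin N → A := fun i => 1 - (1 - (M i)⁻¹ • (x i * star (x i))) ^ n with hQ
  have hrules : ∀ i, P i * x i = 0 ∧ Q i * x i = x i * P i ∧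
      star (x i) * Q i = P i * star (x i) ∧ Q i * P i = 0 := by
    intro i
    have := aux_rules (x i) (hx i) (M i) n
    simpa [hP, hQ] using this
  set η : Fin N → A := fun i => star (x i) * x i - (star (x i) * x i) * (P i) ^ 4 with hη
  set r : A := ∑ i, star (d i) * (η i * d i) with hr
  have hηnorm : ∀ i, ‖η i‖ ≤ 15 * (M i * ((n:ℝ) + 1)⁻¹) := by
    intro i
    have := aux_eta_norm (A := A) (star_mul_self_nonneg (x i)) n hn0 hneven
    simpa [hη, hP, hM] using this
  have hrnorm : ‖r‖ < 1 := by
    have h1 : ‖r‖ ≤ ∑ i, ‖star (d i) * (η i * d i)‖ := norm_sum_le _ _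
    have h2 : ∀ i, ‖star (d i) * (η i * d i)‖ ≤ (15 * (‖d i‖ ^ 2 * M i)) * ((n:ℝ) + 1)⁻¹ := by
      intro i
      have h3 : ‖star (d i) * (η i * d i)‖ ≤ ‖d i‖ * (‖η i‖ * ‖d i‖) := by
        calc ‖star (d i) * (η i * d i)‖ ≤ ‖star (d i)‖ * ‖η i * d i‖ := norm_mul_le _ _
        _ ≤ ‖star (d i)‖ * (‖η i‖ * ‖d i‖) := by
            apply mul_le_mul_of_nonneg_left (norm_mul_le _ _) (norm_nonneg _)
        _ = ‖d i‖ * (‖η i‖ * ‖d i‖) := by rw [norm_star]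
      have h4 := hηnorm i
      have h5 : (0:ℝ) ≤ ‖d i‖ := norm_nonneg _
      have h6 : (0:ℝ) < ((n:ℝ) + 1)⁻¹ := by positivity
      nlinarith [norm_nonneg (η i), hMpos i]
    have h7 : ∑ i, ‖star (d i) * (η i * d i)‖ ≤ K * ((n:ℝ) + 1)⁻¹ := by
      calc ∑ i, ‖star (d i) * (η i * d i)‖
          ≤ ∑ i, (15 * (‖d i‖ ^ 2 * M i)) * ((n:ℝ) + 1)⁻¹ :=
            Finset.sum_le_sum fun i _ => h2 i
      _ = K * ((n:ℝ) + 1)⁻¹ := by rw [hK, Finset.sum_mul]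
    have h8 : K * ((n:ℝ) + 1)⁻¹ < 1 := by
      rw [← div_eq_mul_inv, div_lt_one (by positivity)]
      exact hKlt
    linarith
  set u : Aˣ := Units.oneSub r hrnorm with hu
  set s : A := a * ↑u⁻¹ with hs
  have hsa : s * (1 - r) = a := by
    have h1 : ((1:A) - r) = (u : A) := rfl
    rw [hs, h1, mul_assoc, u.inv_mul, mul_one]
  refine ⟨fun i => s * (star (d i) * (star (x i) * Q i)),
    fun i => Q i * (Q i * (Q i * (x i * d i))),
    fun i => (x i) * P i, fun i => P i, fun i => P i,
    fun i => d i * (s * (star (d i) * (star (x i) * Q i))), ?_⟩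
  have hterm : ∀ i,
      ((s * (star (d i) * (star (x i) * Q i))) * (Q i * (Q i * (Q i * (x i * d i))))
        - (Q i * (Q i * (Q i * (x i * d i)))) * (s * (star (d i) * (star (x i) * Q i))))
      + (((x i) * P i) * P i - P i * ((x i) * P i)) *
          (P i * (d i * (s * (star (d i) * (star (x i) * Q i))))
            - (d i * (s * (star (d i) * (star (x i) * Q i)))) * P i)
      = s * (star (d i) * (star (x i) * (x i * (P i * (P i * (P i * (P i * d i))))))) := by
    intro i
    obtain ⟨h1, h2, h3, h4⟩ := hrules i
    exact aux_key (x i) (star (x i)) (d i) (star (d i)) s (P i) (Q i) h1 h2 h3 h4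
  have hsplit : ∀ i,
      star (d i) * (star (x i) * (x i * (P i * (P i * (P i * (P i * d i))))))
        = star (d i) * (star (x i) * (x i * d i)) - star (d i) * (η i * d i) := by
    intro i
    have hP4 : P i * (P i * (P i * (P i * d i))) = (P i) ^ 4 * d i := by
      have : (P i) ^ 4 = P i * (P i * (P i * P i)) := by
        simp only [pow_succ, pow_zero, one_mul, mul_assoc]
      rw [this]
      simp only [mul_assoc]
    rw [hP4, hη]
    simp only [sub_mul, mul_sub, mul_assoc]
    abel
  have hdiv' : (1:A) = ∑ i, star (d i) * (star (x i) * (x i * d i)) := by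
    rw [hdiv]
    apply Finset.sum_congr rfl
    intro i _
    simp only [mul_assoc]
  calc a = s * (1 - r) := hsa.symm
  _ = s * ∑ i, (star (d i) * (star (x i) * (x i * d i)) - star (d i) * (η i * d i)) := by
      rw [Finset.sum_sub_distrib, ← hdiv', ← hr]
  _ = s * ∑ i, star (d i) * (star (x i) * (x i * (P i * (P i * (P i * (P i * d i)))))) := by
      congr 1
      exact Finset.sum_congr rfl fun i _ => (hsplit i).symm
  _ = ∑ i, s * (star (d i) * (star (x i) * (x i * (P i * (P i * (P i * (P i * d i))))))) := by
      rw [Finset.mul_sum]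
  _ = ∑ i, (((fun i => s * (star (d i) * (star (x i) * Q i))) i *
        (fun i => Q i * (Q i * (Q i * (x i * d i)))) i
        - (fun i => Q i * (Q i * (Q i * (x i * d i)))) i *
          (fun i => s * (star (d i) * (star (x i) * Q i))) i)
      + ((fun i => (x i) * P i) i * (fun i => P i) i
          - (fun i => P i) i * (fun i => (x i) * P i) i) *
        ((fun i => P i) i * (fun i => d i * (s * (star (d i) * (star (x i) * Q i)))) i
          - (fun i => d i * (s * (star (d i) * (star (x i) * Q i)))) i *
            (fun i => P i) i)) := by
      apply Finset.sum_congr rfl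
      intro i _
      simpa using (hterm i).symm
  _ = ∑ i, ((fun i => s * (star (d i) * (star (x i) * Q i))) i *
        (fun i => Q i * (Q i * (Q i * (x i * d i)))) i
        - (fun i => Q i * (Q i * (Q i * (x i * d i)))) i *
          (fun i => s * (star (d i) * (star (x i) * Q i))) i)
      + ∑ i, ((fun i => (x i) * P i) i * (fun i => P i) i
          - (fun i => P i) i * (fun i => (x i) * P i) i) *
        ((fun i => P i) i * (fun i => d i * (s * (star (d i) * (star (x i) * Q i)))) i
          - (fun i => d i * (s * (star (d i) * (star (x i) * Q i)))) i *
            (fun i => P i) i) := by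
      rw [Finset.sum_add_distrib]
end

section
/- Every idempotent e (e² = e) in a unital C*-algebra A is a linear combination of four projections, i.e., there exist projections p₁, p₂, p₃, p₄ ∈ A (pᵢ = pᵢ* = pᵢ²) and scalars λ₁, λ₂, λ₃, λ₄ ∈ ℂ with e = λ₁p₁ + λ₂p₂ + λ₃p₃ + λ₄p₄. -/
set_option linter.unusedSectionVars false
set_option maxHeartbeats 1000000

section aux
variable {A : Type*} [CStarAlgebra A] [PartialOrder A] [StarOrderedRing A]

lemma my_inv_comm {a x : A} (hu : IsUnit a) (hc : x * a = a * x) :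
    x * Ring.inverse a = Ring.inverse a * x := by
  have h1 : Ring.inverse a * a = 1 := Ring.inverse_mul_cancel a hu
  have h2 : a * Ring.inverse a = 1 := Ring.mul_inverse_cancel a hu
  calc x * Ring.inverse a = (Ring.inverse a * a) * (x * Ring.inverse a) := by rw [h1, one_mul]
    _ = Ring.inverse a * (a * x) * Ring.inverse a := by noncomm_ring
    _ = Ring.inverse a * (x * a) * Ring.inverse a := by rw [hc]
    _ = (Ring.inverse a * x) * (a * Ring.inverse a) := by noncomm_ring
    _ = Ring.inverse a * x := by rw [h2, mul_one]

lemma my_inv_star {a : A} (hu : IsUnit a) (ha : star a = a) :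
    star (Ring.inverse a) = Ring.inverse a := by
  have h2 : a * Ring.inverse a = 1 := Ring.mul_inverse_cancel a hu
  have h3 : star (Ring.inverse a) * a = 1 := by
    calc star (Ring.inverse a) * a = star (star a * Ring.inverse a) := by rw [star_mul, star_star]
      _ = star (a * Ring.inverse a) := by rw [ha]
      _ = 1 := by rw [h2, star_one]
  calc star (Ring.inverse a) = star (Ring.inverse a) * (a * Ring.inverse a) := by rw [h2, mul_one]
    _ = (star (Ring.inverse a) * a) * Ring.inverse a := by rw [mul_assoc]
    _ = Ring.inverse a := by rw [h3, one_mul]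

noncomputable def sqS (μ : A) : A := CFC.sqrt (1 - μ * star μ)
noncomputable def sqR (μ : A) : A := Ring.inverse (1 + sqS μ)
noncomputable def sqD (p μ : A) : A := p + p * sqS μ + star μ * sqR μ * μ
noncomputable def sqQ (p μ : A) (ω : ℂ) : A := (1/2 : ℂ) • (sqD p μ + ω • μ + (star ω) • star μ)

lemma squareZero_proj (p μ : A) (hp1 : star p = p) (hp2 : p * p = p)
    (hμ2 : μ * μ = 0) (hpμ : p * μ = μ) (hμp : μ * p = 0)
    (hK1 : μ * star μ ≤ 1) (ω : ℂ) (hω : star ω * ω = 1) :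
    star (sqQ p μ ω) = sqQ p μ ω ∧ sqQ p μ ω * sqQ p μ ω = sqQ p μ ω := by
  have hω' : ω * star ω = 1 := by rw [mul_comm]; exact hω
  have hK0 : 0 ≤ μ * star μ := mul_star_self_nonneg μ
  have hX0 : 0 ≤ 1 - μ * star μ := sub_nonneg.mpr hK1
  set S := sqS μ with hSdef
  have hS0 : 0 ≤ S := CFC.sqrt_nonneg _
  have hSsa : star S = S := IsSelfAdjoint.of_nonneg hS0
  have hSS : S * S = 1 - μ * star μ := CFC.sqrt_mul_sqrt_self _ hX0
  -- star facts
  have hμs2 : star μ * star μ = 0 := by rw [← star_mul, hμ2, star_zero]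
  have hμsp : star μ * p = star μ := by
    have := congrArg star hpμ; rwa [star_mul, hp1] at this
  have hpμs : p * star μ = 0 := by
    have := congrArg star hμp; rwa [star_mul, hp1, star_zero] at this
  have hKp : (μ * star μ) * p = μ * star μ := by rw [mul_assoc, hμsp]
  have hpK : p * (μ * star μ) = μ * star μ := by rw [← mul_assoc, hpμ]
  -- S commutes with p
  have hSp : S * p = p * S := by
    set u := p + p - 1 with hu
    have hu2 : u * u = 1 := by
      simp only [hu, sub_mul, mul_sub, add_mul, mul_add, hp2, mul_one, one_mul]
      abel
    have hus : star u = u := by simp [hu, hp1]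
    have hXu : u * (1 - μ * star μ) * u = 1 - μ * star μ := by
      have huK : u * (μ * star μ) * u = μ * star μ := by
        simp only [hu, sub_mul, mul_sub, add_mul, mul_add, hpK, hKp, one_mul, mul_one, hp2]
        abel
      calc u * (1 - μ * star μ) * u = u * u - u * (μ * star μ) * u := by noncomm_ring
        _ = 1 - μ * star μ := by rw [hu2, huK]
    have h1 : (u * S * u) * (u * S * u) = 1 - μ * star μ := by
      calc (u * S * u) * (u * S * u) = u * S * (u * u) * S * u := by noncomm_ring
        _ = u * (S * S) * u := by rw [hu2]; noncomm_ring
        _ = u * (1 - μ * star μ) * u := by rw [hSS]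
        _ = 1 - μ * star μ := hXu
    have h2 : 0 ≤ u * S * u := by
      have := star_left_conjugate_nonneg hS0 u; rwa [hus] at this
    have h3 : S = u * S * u := CFC.sqrt_unique h1 h2
    have hSu : S * u = u * S := by
      calc S * u = u * S * u * u := by rw [← h3]
        _ = u * S * (u * u) := by rw [mul_assoc]
        _ = u * S := by rw [hu2, mul_one]
    have h4 : S * p + S * p = p * S + p * S := by
      have : S * (p + p - 1) = (p + p - 1) * S := hSu
      rw [mul_sub, sub_mul, mul_add, add_mul, mul_one, one_mul] at this
      have := congrArg (· + S) this
      simpa [sub_add_cancel] using this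
    have := congrArg (fun x => (2:ℝ)⁻¹ • x) h4
    simpa [← two_smul ℝ, smul_smul] using this

  -- R facts
  have hU : IsUnit (1 + S) :=
    CStarAlgebra.isUnit_of_le 1 (le_add_of_nonneg_right hS0) isStrictlyPositive_one
  set R := sqR μ with hRdef
  have hRR : R = Ring.inverse (1 + S) := by rw [hRdef, sqR]
  have hR1 : R * (1 + S) = 1 := by rw [hRR]; exact Ring.inverse_mul_cancel _ hU
  have h1R : (1 + S) * R = 1 := by rw [hRR]; exact Ring.mul_inverse_cancel _ hU
  have hRS : S * R = R * S := by
    rw [hRR]; exact my_inv_comm hU (by noncomm_ring)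
  have hRp : p * R = R * p := by
    rw [hRR]; refine my_inv_comm hU ?_
    rw [mul_add, add_mul, mul_one, one_mul, hSp]
  have hRstar : star R = R := by
    rw [hRR]; exact my_inv_star hU (by rw [star_add, star_one, hSsa])
  have hone : R + S * R = 1 := by
    have : (1 + S) * R = R + S * R := by rw [add_mul, one_mul]
    rw [← this]; exact h1R
  have hSR1 : S * R = 1 - R := by rw [← hone]; abel

  -- K and R interaction
  have hKS : S * (μ * star μ) = (μ * star μ) * S := by
    have h9 : S - S * (S * S) = S - (S * S) * S := by noncomm_ring
    rw [hSS, mul_sub, sub_mul, mul_one, one_mul] at h9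
    exact sub_right_injective (sub_right_injective h9)
  have hK' : μ * star μ = (1 - S) * (1 + S) := by
    have h5 : (1 - S) * (1 + S) = 1 - S * S := by noncomm_ring
    rw [h5, hSS]; abel
  have hKR : (μ * star μ) * R = 1 - S := by
    rw [hK', mul_assoc, h1R, mul_one]
  have hRKc : (μ * star μ) * R = R * (μ * star μ) := by
    rw [hRR]; refine my_inv_comm hU ?_
    rw [mul_add, add_mul, mul_one, one_mul, hKS]
  have hRK : R * (μ * star μ) = 1 - S := by rw [← hRKc, hKR]
  -- the 25 products
  have hD : sqD p μ = p + p * S + star μ * R * μ := by rw [sqD]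
  have hQ : sqQ p μ ω = (1/2 : ℂ) • (p + p * S + star μ * R * μ + ω • μ + star ω • star μ) := by
    rw [sqQ, hD]
  have h12 : p * (p * S) = p * S := by rw [← mul_assoc, hp2]
  have h13 : p * (star μ * R * μ) = 0 := by
    calc p * (star μ * R * μ) = (p * star μ) * (R * μ) := by noncomm_ring
      _ = 0 := by rw [hpμs, zero_mul]
  have h14 : p * (ω • μ) = ω • μ := by rw [mul_smul_comm, hpμ]
  have h15 : p * (star ω • star μ) = 0 := by rw [mul_smul_comm, hpμs, smul_zero]
  have h21 : p * S * p = p * S := by rw [mul_assoc, hSp, ← mul_assoc, hp2]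
  have h22 : p * S * (p * S) = p - μ * star μ := by
    calc p * S * (p * S) = p * (S * p) * S := by noncomm_ring
      _ = p * (p * S) * S := by rw [hSp]
      _ = (p * p) * (S * S) := by noncomm_ring
      _ = p * (1 - μ * star μ) := by rw [hp2, hSS]
      _ = p - μ * star μ := by rw [mul_sub, mul_one, hpK]
  have h23 : p * S * (star μ * R * μ) = 0 := by
    calc p * S * (star μ * R * μ) = S * (p * star μ) * (R * μ) := by
          rw [← hSp]; noncomm_ring
      _ = 0 := by rw [hpμs, mul_zero, zero_mul]
  have hpSμ : p * S * μ = S * μ := by rw [← hSp, mul_assoc, hpμ]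
  have h24 : p * S * (ω • μ) = ω • (S * μ) := by rw [mul_smul_comm, hpSμ]
  have h25 : p * S * (star ω • star μ) = 0 := by
    rw [mul_smul_comm, ← hSp, mul_assoc, hpμs, mul_zero, smul_zero]
  have h31 : star μ * R * μ * p = 0 := by rw [mul_assoc, hμp, mul_zero]
  have h32 : star μ * R * μ * (p * S) = 0 := by rw [← mul_assoc, h31, zero_mul]
  have h33 : star μ * R * μ * (star μ * R * μ) = star μ * R * μ - star μ * (S * R) * μ := by
    calc star μ * R * μ * (star μ * R * μ) = star μ * (R * (μ * star μ)) * (R * μ) := by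
          noncomm_ring
      _ = star μ * (1 - S) * (R * μ) := by rw [hRK]
      _ = star μ * R * μ - star μ * (S * R) * μ := by noncomm_ring
  have h34 : star μ * R * μ * (ω • μ) = 0 := by
    rw [mul_smul_comm, mul_assoc, hμ2, mul_zero, smul_zero]
  have h35 : star μ * R * μ * (star ω • star μ) = star ω • star μ - star ω • (star μ * S) := by
    rw [mul_smul_comm]
    have h6 : star μ * R * μ * star μ = star μ - star μ * S := by
      calc star μ * R * μ * star μ = star μ * (R * (μ * star μ)) := by noncomm_ring
        _ = star μ * (1 - S) := by rw [hRK]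
        _ = star μ - star μ * S := by rw [mul_sub, mul_one]
    rw [h6, smul_sub]
  have h41 : (ω • μ) * p = 0 := by rw [smul_mul_assoc, hμp, smul_zero]
  have h42 : (ω • μ) * (p * S) = 0 := by
    rw [smul_mul_assoc, ← mul_assoc, hμp, zero_mul, smul_zero]
  have h43 : (ω • μ) * (star μ * R * μ) = ω • μ - ω • (S * μ) := by
    rw [smul_mul_assoc]
    have h7 : μ * (star μ * R * μ) = μ - S * μ := by
      calc μ * (star μ * R * μ) = ((μ * star μ) * R) * μ := by noncomm_ring
        _ = (1 - S) * μ := by rw [hKR]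
        _ = μ - S * μ := by rw [sub_mul, one_mul]
    rw [h7, smul_sub]
  have h44 : (ω • μ) * (ω • μ) = 0 := by
    rw [smul_mul_assoc, mul_smul_comm, hμ2, smul_zero, smul_zero]
  have h45 : (ω • μ) * (star ω • star μ) = μ * star μ := by
    rw [smul_mul_assoc, mul_smul_comm, smul_smul, hω', one_smul]
  have h51 : (star ω • star μ) * p = star ω • star μ := by rw [smul_mul_assoc, hμsp]
  have h52 : (star ω • star μ) * (p * S) = star ω • (star μ * S) := by
    rw [smul_mul_assoc, ← mul_assoc, hμsp]
  have h53 : (star ω • star μ) * (star μ * R * μ) = 0 := by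
    rw [smul_mul_assoc]
    have h8 : star μ * (star μ * R * μ) = 0 := by
      calc star μ * (star μ * R * μ) = (star μ * star μ) * (R * μ) := by noncomm_ring
        _ = 0 := by rw [hμs2, zero_mul]
    rw [h8, smul_zero]
  have h54 : (star ω • star μ) * (ω • μ) = star μ * R * μ + star μ * (S * R) * μ := by
    rw [smul_mul_assoc, mul_smul_comm, smul_smul, hω, one_smul]
    calc star μ * μ = star μ * ((R + S * R) * μ) := by rw [hone, one_mul]
      _ = star μ * R * μ + star μ * (S * R) * μ := by noncomm_ring
  have h55 : (star ω • star μ) * (star ω • star μ) = 0 := by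
    rw [smul_mul_assoc, mul_smul_comm, hμs2, smul_zero, smul_zero]
  -- the expansion
  have hFF : (p + p * S + star μ * R * μ + ω • μ + star ω • star μ) *
      (p + p * S + star μ * R * μ + ω • μ + star ω • star μ) =
      (p + p * S + star μ * R * μ + ω • μ + star ω • star μ) +
      (p + p * S + star μ * R * μ + ω • μ + star ω • star μ) := by
    simp only [add_mul, mul_add, hp2, h12, h13, h14, h15, h21, h22, h23, h24, h25,
      h31, h32, h33, h34, h35, h41, h42, h43, h44, h45, h51, h52, h53, h54, h55]
    module
  constructor
  · rw [hQ]
    simp only [star_smul, star_add, star_mul, star_star, hp1, hSsa, hRstar, hSp, mul_assoc,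
      star_smul, Complex.star_def, map_div₀, map_one, map_ofNat, Complex.conj_conj]
    module
  · calc sqQ p μ ω * sqQ p μ ω
        = ((1/2 : ℂ) * (1/2 : ℂ)) • ((p + p * S + star μ * R * μ + ω • μ + star ω • star μ) *
          (p + p * S + star μ * R * μ + ω • μ + star ω • star μ)) := by
          rw [hQ, smul_mul_smul_comm]
      _ = sqQ p μ ω := by rw [hFF, hQ]; module

end aux

/-- every idempotent in a unital C*-algebra is a linear combination of
four projections. -/
theorem idempotent_linear_combination_of_four_projections (A : Type*) [CStarAlgebra A]
    (e : A) (he : e * e = e) :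
    ∃ (p : Fin 4 → A) (l : Fin 4 → ℂ),
      (∀ i, star (p i) = p i ∧ p i * p i = p i) ∧ e = ∑ i, l i • p i := by
  letI := CStarAlgebra.spectralOrder A
  haveI := CStarAlgebra.spectralOrderedRing A
  set f := star e with hfdef
  have hff : f * f = f := by
    have := congrArg star he; rwa [star_mul] at this
  have hsf : star f = e := star_star e
  set h := 1 + star (f - e) * (f - e) with hhdef
  have hexp : h = 1 + e * f - e - f + f * e := by
    rw [hhdef, star_sub, hsf, ← hfdef, sub_mul, mul_sub, mul_sub, he, hff]
    abel
  have hhe : h * e = e * (f * e) := by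
    rw [hexp]
    calc (1 + e * f - e - f + f * e) * e
        = e + e * (f * e) - e * e - f * e + f * (e * e) := by noncomm_ring
      _ = e * (f * e) := by rw [he]; abel
  have heh : e * h = e * (f * e) := by
    rw [hexp]
    calc e * (1 + e * f - e - f + f * e)
        = e + (e * e) * f - e * e - e * f + e * (f * e) := by noncomm_ring
      _ = e * (f * e) := by rw [he]; abel
  have hcomm : e * h = h * e := by rw [hhe, heh]
  have hstarh : star h = h := by
    rw [hhdef, star_add, star_one, star_mul, star_star]
  have hcommf : f * h = h * f := by
    have := congrArg star hcomm
    rw [star_mul, star_mul, hstarh, ← hfdef] at this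
    exact this.symm
  have hU : IsUnit h := by
    rw [hhdef]
    exact CStarAlgebra.isUnit_of_le 1
      (le_add_of_nonneg_right (star_mul_self_nonneg _)) isStrictlyPositive_one
  set g := Ring.inverse h with hgdef
  have hge : e * g = g * e := by rw [hgdef]; exact my_inv_comm hU hcomm
  have hgf : f * g = g * f := by rw [hgdef]; exact my_inv_comm hU hcommf
  have hgh : g * h = 1 := by rw [hgdef]; exact Ring.inverse_mul_cancel _ hU
  have hhg : h * g = 1 := by rw [hgdef]; exact Ring.mul_inverse_cancel _ hU
  have hgstar : star g = g := by rw [hgdef]; exact my_inv_star hU hstarh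
  set p := e * f * g with hpdef
  have hp1 : star p = p := by
    rw [hpdef, star_mul, star_mul, hgstar, hsf, ← hfdef]
    calc g * (e * f) = (g * e) * f := by rw [mul_assoc]
      _ = (e * g) * f := by rw [← hge]
      _ = e * (f * g) := by rw [mul_assoc, ← hgf]
      _ = e * f * g := by rw [mul_assoc]
  have hp2 : p * p = p := by
    rw [hpdef]
    calc (e * f * g) * (e * f * g) = (e * f) * ((g * e) * (f * g)) := by noncomm_ring
      _ = (e * f) * ((e * g) * (f * g)) := by rw [← hge]
      _ = (e * f) * (e * ((g * f) * g)) := by noncomm_ring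
      _ = (e * f) * (e * ((f * g) * g)) := by rw [← hgf]
      _ = ((e * (f * e)) * f) * (g * g) := by noncomm_ring
      _ = ((h * e) * f) * (g * g) := by rw [← hhe]
      _ = ((e * h) * f) * (g * g) := by rw [← hcomm]
      _ = (e * (f * h)) * (g * g) := by rw [mul_assoc e h f, ← hcommf]
      _ = (e * f) * ((h * g) * g) := by noncomm_ring
      _ = e * f * g := by rw [hhg, one_mul]
  have hpe : p * e = e := by
    rw [hpdef]
    calc (e * f * g) * e = (e * f) * (g * e) := by noncomm_ring
      _ = (e * f) * (e * g) := by rw [← hge]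
      _ = (e * (f * e)) * g := by noncomm_ring
      _ = (h * e) * g := by rw [← hhe]
      _ = (e * h) * g := by rw [← hcomm]
      _ = e * (h * g) := by rw [mul_assoc]
      _ = e := by rw [hhg, mul_one]
  have hep : e * p = p := by
    rw [hpdef]
    calc e * (e * f * g) = ((e * e) * f) * g := by noncomm_ring
      _ = e * f * g := by rw [he]
  have hn2 : (e - p) * (e - p) = 0 := by
    rw [sub_mul, mul_sub, mul_sub, he, hp2, hpe, hep]; abel
  have hpn : p * (e - p) = e - p := by rw [mul_sub, hpe, hp2]
  have hnp : (e - p) * p = 0 := by rw [sub_mul, hep, hp2, sub_self]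
  obtain ⟨s, hs0, hsle⟩ : ∃ s : ℝ, 0 < s ∧ s * ‖e - p‖ ≤ 1 := by
    refine ⟨(‖e - p‖ + 1)⁻¹, by positivity, ?_⟩
    have h1 : ‖e - p‖ ≤ ‖e - p‖ + 1 := by linarith
    calc (‖e - p‖ + 1)⁻¹ * ‖e - p‖ ≤ (‖e - p‖ + 1)⁻¹ * (‖e - p‖ + 1) :=
          mul_le_mul_of_nonneg_left h1 (by positivity)
      _ = 1 := inv_mul_cancel₀ (by positivity)
  set μ := (s : ℂ) • (e - p) with hμdef
  have hμ2 : μ * μ = 0 := by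
    rw [hμdef, smul_mul_assoc, mul_smul_comm, hn2, smul_zero, smul_zero]
  have hpμ : p * μ = μ := by rw [hμdef, mul_smul_comm, hpn]
  have hμp : μ * p = 0 := by rw [hμdef, smul_mul_assoc, hnp, smul_zero]
  have hnormμ : ‖μ‖ ≤ 1 := by
    rw [hμdef, norm_smul, Complex.norm_real, Real.norm_eq_abs, abs_of_pos hs0]
    exact hsle
  have hK1 : μ * star μ ≤ 1 := by
    refine (CStarAlgebra.norm_le_one_iff_of_nonneg _ (mul_star_self_nonneg μ)).mp ?_
    rw [CStarRing.norm_self_mul_star]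
    exact mul_le_one₀ hnormμ (norm_nonneg μ) hnormμ
  have hstarμ : star μ = (s : ℂ) • star (e - p) := by
    rw [hμdef, star_smul, Complex.star_def, Complex.conj_ofReal]
  obtain ⟨hq11, hq12⟩ := squareZero_proj p μ hp1 hp2 hμ2 hpμ hμp hK1 1 (by simp)
  obtain ⟨hq21, hq22⟩ := squareZero_proj p μ hp1 hp2 hμ2 hpμ hμp hK1 Complex.I
    (by simp [Complex.star_def, Complex.conj_I])
  obtain ⟨hq31, hq32⟩ := squareZero_proj p μ hp1 hp2 hμ2 hpμ hμp hK1 (-1) (by simp)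
  refine ⟨![p, sqQ p μ 1, sqQ p μ Complex.I, sqQ p μ (-1)],
    ![1, (1 + Complex.I)/(2*(s:ℂ)), -Complex.I/(s:ℂ), (Complex.I - 1)/(2*(s:ℂ))], ?_, ?_⟩
  · intro i
    fin_cases i
    · exact ⟨hp1, hp2⟩
    · exact ⟨hq11, hq12⟩
    · exact ⟨hq21, hq22⟩
    · exact ⟨hq31, hq32⟩
  · have hsC : (s : ℂ) ≠ 0 := by
      simpa using hs0.ne'
    rw [Fin.sum_univ_four]
    simp only [Matrix.cons_val_zero, Matrix.cons_val_one, Matrix.head_cons,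
      Matrix.cons_val_two, Matrix.tail_cons, Matrix.cons_val_three]
    simp only [sqQ, hμdef, hstarμ, star_one, star_neg, Complex.star_def, Complex.conj_I]
    match_scalars
    all_goals field_simp
    all_goals ring_nf
    all_goals simp [Complex.I_sq]
    all_goals ring_nf
    all_goals rw [← mul_pow, mul_inv_cancel₀ hsC, one_pow]
end
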